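/- Define h_0 := 1, Q_0 := W_0, and for k = 1,…,n: h_k := ω_k h_{k-1} t (n−k+1)/(ω_{k-1} k (1−t) + ω_k h_{k-1} t (n−k+1)) and Q_k := (1 − h_k) Q_{k-1} + h_k W_k, where t ∈ (0,1). Then Q_n equals the rational Bézier curve value R_n(t) = (Σ_{k=0}^n ω_k W_k B^n_k(t))/(Σ_{k=0}^n ω_k B^n_k(t)). -/

import Mathlib

open Finset

/-- The Bernstein polynomial `B^n_k` evaluated at `t`. -/
def bern (n k : ℕ) (t : ℝ) : ℝ := (n.choose k : ℝ) * t ^ k * (1 - t) ^ (n - k)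

theorem stmt10 (n d : ℕ) (t : ℝ) (ht : t ∈ Set.Ioo (0 : ℝ) 1)
    (ω : ℕ → ℝ) (W : ℕ → Fin d → ℝ) (hω : ∀ k ≤ n, 0 < ω k)
    (h : ℕ → ℝ) (Q : ℕ → Fin d → ℝ)
    (hh0 : h 0 = 1) (hQ0 : Q 0 = W 0)
    (hh : ∀ k, 1 ≤ k → k ≤ n →
      h k = ω k * h (k - 1) * t * ((n - k + 1 : ℕ) : ℝ) /
        (ω (k - 1) * (k : ℝ) * (1 - t) +
          ω k * h (k - 1) * t * ((n - k + 1 : ℕ) : ℝ)))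
    (hQ : ∀ k, 1 ≤ k → k ≤ n → Q k = (1 - h k) • Q (k - 1) + h k • W k) :
    Q n = (∑ k ∈ range (n + 1), ω k * bern n k t)⁻¹ •
        ∑ k ∈ range (n + 1), (ω k * bern n k t) • W k := by
  obtain ⟨ht0, ht1⟩ := ht
  have h1t : (0:ℝ) < 1 - t := by linarith
  have hbern : ∀ j, j ≤ n → 0 < bern n j t := by
    intro j hj
    have hc := Nat.choose_pos hj
    unfold bern
    positivity
  have hS : ∀ k, k ≤ n → 0 < ∑ j ∈ range (k+1), ω j * bern n j t := by
    intro k hk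
    apply Finset.sum_pos
    · intro j hj
      simp only [mem_range] at hj
      exact mul_pos (hω j (by omega)) (hbern j (by omega))
    · exact ⟨0, by simp⟩
  have key : ∀ k, k ≤ n →
      h k = ω k * bern n k t / (∑ j ∈ range (k+1), ω j * bern n j t) ∧
      Q k = (∑ j ∈ range (k+1), ω j * bern n j t)⁻¹ •
        ∑ j ∈ range (k+1), (ω j * bern n j t) • W j := by
    intro k
    induction k with
    | zero =>
      intro _
      have hx : ω 0 * bern n 0 t ≠ 0 :=
        ne_of_gt (mul_pos (hω 0 (Nat.zero_le n)) (hbern 0 (Nat.zero_le n)))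
      constructor
      · simp only [zero_add, range_one, sum_singleton, hh0]
        rw [div_self hx]
      · simp only [zero_add, range_one, sum_singleton, hQ0]
        rw [smul_smul, inv_mul_cancel₀ hx, one_smul]
    | succ k ih =>
      intro hk1
      have hk : k ≤ n := by omega
      obtain ⟨ihh, ihQ⟩ := ih hk
      set Sk := ∑ j ∈ range (k+1), ω j * bern n j t with hSkdef
      have hSk0 : 0 < Sk := hS k hk
      have hB1 : 0 < ω (k+1) * bern n (k+1) t :=
        mul_pos (hω (k+1) hk1) (hbern (k+1) hk1)
      have hS10 : 0 < Sk + ω (k+1) * bern n (k+1) t := by linarith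
      have hSsucc : ∑ j ∈ range (k+1+1), ω j * bern n j t
          = Sk + ω (k+1) * bern n (k+1) t := Finset.sum_range_succ _ _
      have hcast : ((n - (k+1) + 1 : ℕ) : ℝ) = ((n - k : ℕ) : ℝ) := by
        congr 1; omega
      have h2 : (n.choose (k+1) : ℝ) * ((k+1:ℕ) : ℝ)
          = (n.choose k : ℝ) * ((n - k : ℕ) : ℝ) := by
        exact_mod_cast congrArg (Nat.cast : ℕ → ℝ) (Nat.choose_succ_right_eq n k)
      have hBid : bern n k t * t * ((n - k : ℕ) : ℝ)
          = ((k+1 : ℕ) : ℝ) * (1 - t) * bern n (k+1) t := by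
      -- bern identity
        unfold bern
        have h1 : n - k = (n - (k+1)) + 1 := by omega
        rw [h1] at h2 ⊢
        rw [pow_succ]
        push_cast at h2 ⊢
        linear_combination (-(t ^ (k+1) * (1 - t) ^ (n - (k+1)) * (1 - t))) * h2
      have hh' : h (k+1) = ω (k+1) * bern n (k+1) t
          / (Sk + ω (k+1) * bern n (k+1) t) := by
        rw [hh (k+1) (by omega) hk1]
        simp only [Nat.add_sub_cancel]
        rw [ihh, hcast]
        have hnk : (0:ℝ) < ((n - k : ℕ) : ℝ) := by
          have : 1 ≤ n - k := by omega
          exact_mod_cast Nat.lt_of_lt_of_le Nat.zero_lt_one this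
        have hk1c : (0:ℝ) < ((k + 1 : ℕ) : ℝ) := by positivity
        have hD0 : 0 < ω k * ((k+1:ℕ):ℝ) * (1 - t)
            + ω (k+1) * (ω k * bern n k t / Sk) * t * ((n - k : ℕ) : ℝ) := by
          have h1' := hω k hk
          have h2' := hω (k+1) hk1
          have h3' := hbern k hk
          positivity
        rw [div_eq_div_iff (ne_of_gt hD0) (ne_of_gt hS10)]
        field_simp
        push_cast [Nat.cast_sub hk] at hBid ⊢
        linear_combination (ω (k+1) * ω k * Sk) * hBid
      constructor
      · rw [hh', hSsucc]
      rw [hQ (k+1) (by omega) hk1]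
      simp only [Nat.add_sub_cancel]
      have hTsucc : (∑ j ∈ range (k+1+1), (ω j * bern n j t) • W j)
          = (∑ j ∈ range (k+1), (ω j * bern n j t) • W j)
            + (ω (k+1) * bern n (k+1) t) • W (k+1) := Finset.sum_range_succ _ _
      rw [ihQ, hh', hSsucc, hTsucc]
      funext i
      simp only [Pi.add_apply, Pi.smul_apply, smul_eq_mul, Finset.sum_apply,
        Pi.sub_apply]
      field_simp
      ring
  have := (key n le_rfl).2
  exact this
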